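/- Let f be given by a power series f(x) = ∑_{n≥0} a_n x^n with coefficients a_n ∈ ℂ_p, and let r > 0 be a real number such that ‖a_n‖·r^n → 0 as n → ∞ (so the series converges for all x ∈ ℂ_p with ‖x‖ ≤ r). If f(x) ≠ 0 for every x ∈ ℂ_p with ‖x‖ ≤ r, then the absolute value of f is constant on the closed disc: ‖f(x)‖ = ‖a_0‖ for all x ∈ ℂ_p with ‖x‖ ≤ r. -/

import Mathlib

/-!
STATEMENT 11. Let `f(x) = ∑_{n≥0} aₙ xⁿ` be a power series with coefficients in `ℂ_p` and
let `r > 0` be real with `‖aₙ‖·rⁿ → 0` (so the series converges on the closed disc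
`‖x‖ ≤ r`).  If `f(x) ≠ 0` for every `x` with `‖x‖ ≤ r`, then `‖f‖` is constant on the
closed disc: `‖f(x)‖ = ‖a₀‖` whenever `‖x‖ ≤ r`.

`ℂ_p` is characterised by its defining properties: `Cp` is a complete, algebraically
closed, ultrametric normed field with an isometric embedding of `ℚ_p` and a dense copy
of an algebraic closure `Qbar` of `ℚ_p`.
-/

set_option linter.unusedVariables false
set_option linter.unusedSectionVars false
set_option maxHeartbeats 1000000


open Polynomial

variable {K : Type} [NormedField K] [IsUltrametricDist K]

lemma ultra_sub_le_max (x y : K) : ‖x - y‖ ≤ max ‖x‖ ‖y‖ := by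
  rw [sub_eq_add_neg]
  exact (IsUltrametricDist.norm_add_le_max x (-y)).trans (by rw [norm_neg])




lemma ultra_add_eq {a b : K} (h : ‖b‖ < ‖a‖) : ‖a + b‖ = ‖a‖ := by
  rw [add_comm, IsUltrametricDist.norm_add_eq_max_of_norm_ne_norm (ne_of_lt h), max_eq_right h.le]

lemma mprod_nonneg : ∀ (s : Multiset ℝ), (∀ x ∈ s, (0:ℝ) ≤ x) → 0 ≤ s.prod := by
  intro s
  induction s using Multiset.induction_on with
  | empty => intro _; simp
  | cons a s ih =>
      intro h
      rw [Multiset.prod_cons]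
      exact mul_nonneg (h a (Multiset.mem_cons_self a s))
        (ih fun x hx => h x (Multiset.mem_cons_of_mem hx))

lemma mprod_pos : ∀ (s : Multiset ℝ), (∀ x ∈ s, (0:ℝ) < x) → 0 < s.prod := by
  intro s
  induction s using Multiset.induction_on with
  | empty => intro _; simp
  | cons a s ih =>
      intro h
      rw [Multiset.prod_cons]
      exact mul_pos (h a (Multiset.mem_cons_self a s))
        (ih fun x hx => h x (Multiset.mem_cons_of_mem hx))

lemma mprod_le_pow {c : ℝ} : ∀ (s : Multiset ℝ), (∀ x ∈ s, (0:ℝ) ≤ x) → (∀ x ∈ s, x ≤ c) →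
    s.prod ≤ c ^ Multiset.card s := by
  intro s
  induction s using Multiset.induction_on with
  | empty => intro _ _; simp
  | cons a s ih =>
      intro h0 hc
      rw [Multiset.prod_cons, Multiset.card_cons, pow_succ']
      exact mul_le_mul (hc a (Multiset.mem_cons_self a s))
        (ih (fun x hx => h0 x (Multiset.mem_cons_of_mem hx))
            (fun x hx => hc x (Multiset.mem_cons_of_mem hx)))
        (mprod_nonneg s fun x hx => h0 x (Multiset.mem_cons_of_mem hx))
        ((h0 a (Multiset.mem_cons_self a s)).trans (hc a (Multiset.mem_cons_self a s)))

lemma pow_le_mprod {t : ℝ} (ht : 0 ≤ t) : ∀ (s : Multiset ℝ), (∀ x ∈ s, t ≤ x) →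
    t ^ Multiset.card s ≤ s.prod := by
  intro s
  induction s using Multiset.induction_on with
  | empty => intro _; simp
  | cons a s ih =>
      intro h
      rw [Multiset.prod_cons, Multiset.card_cons, pow_succ']
      exact mul_le_mul (h a (Multiset.mem_cons_self a s))
        (ih fun x hx => h x (Multiset.mem_cons_of_mem hx))
        (pow_nonneg ht _) ((ht.trans (h a (Multiset.mem_cons_self a s))))

lemma norm_sum_eq_of_dominant {ι : Type*} [DecidableEq ι] {s : Finset ι} {f : ι → K} {i0 : ι} (h0 : i0 ∈ s)
    (h : ∀ i ∈ s, i ≠ i0 → ‖f i‖ < ‖f i0‖) : ‖∑ i ∈ s, f i‖ = ‖f i0‖ := by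
  rw [← Finset.add_sum_erase s f h0]
  rcases (s.erase i0).eq_empty_or_nonempty with he | hne
  · rw [he]; simp
  · apply ultra_add_eq
    refine lt_of_le_of_lt (hne.norm_sum_le_sup'_norm f) ?_
    rw [Finset.sup'_lt_iff]
    intro i hi
    exact h i (Finset.mem_of_mem_erase hi) (Finset.ne_of_mem_erase hi)


/-- product of linear factors -/
noncomputable def QP (R : Multiset K) : K[X] := (R.map fun w => X - C w).prod

lemma QP_monic (R : Multiset K) : (QP R).Monic :=
  monic_multiset_prod_of_monic _ _ fun w _ => monic_X_sub_C w

lemma QP_natDegree (R : Multiset K) : (QP R).natDegree = Multiset.card R := by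
  have := natDegree_multiset_prod_of_monic (R.map fun w => X - C w)
    (fun q hq => by obtain ⟨u, _, rfl⟩ := Multiset.mem_map.mp hq; exact monic_X_sub_C u)
  rw [QP, this]
  simp [Multiset.map_map, Function.comp]

lemma QP_cons (w : K) (R : Multiset K) : QP (w ::ₘ R) = (X - C w) * QP R := by
  rw [QP, Multiset.map_cons, Multiset.prod_cons]; rfl

lemma QP_add (R S : Multiset K) : QP (R + S) = QP R * QP S := by
  rw [QP, Multiset.map_add, Multiset.prod_add]; rfl

lemma norm_mprod : ∀ (s : Multiset K), ‖s.prod‖ = (s.map fun x => ‖x‖).prod := by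
  intro s
  induction s using Multiset.induction_on with
  | empty => simp
  | cons a s ih => rw [Multiset.prod_cons, Multiset.map_cons, Multiset.prod_cons, norm_mul, ih]

lemma QP_eval_norm (R : Multiset K) (x : K) :
    ‖(QP R).eval x‖ = (R.map fun w => ‖x - w‖).prod := by
  rw [QP, eval_multiset_prod, Multiset.map_map, norm_mprod, Multiset.map_map]
  congr 1
  apply Multiset.map_congr rfl
  intro w _
  simp

lemma coeff_linear_mul_zero (w : K) (q : K[X]) :
    ((X - C w) * q).coeff 0 = -(w * q.coeff 0) := by
  simp [sub_mul, mul_coeff_zero, coeff_C_mul]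

lemma coeff_linear_mul_succ (w : K) (q : K[X]) (j : ℕ) :
    ((X - C w) * q).coeff (j + 1) = q.coeff j - w * q.coeff (j + 1) := by
  simp [sub_mul, coeff_X_mul, coeff_C_mul]

/-- L1 : all roots in the disc of radius r -/
lemma QP_coeff_le {r : ℝ} (hr : 0 < r) :
    ∀ (R : Multiset K), (∀ w ∈ R, ‖w‖ ≤ r) →
    ∀ j, ‖(QP R).coeff j‖ * r ^ j ≤ r ^ Multiset.card R := by
  intro R
  induction R using Multiset.induction_on with
  | empty =>
      intro _ j
      rcases Nat.eq_zero_or_pos j with rfl | hj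
      · simp [QP]
      · rw [QP]
        simp only [Multiset.map_zero, Multiset.prod_zero]
        rw [coeff_one]
        rw [if_neg (by omega)]
        simp
  | cons w R ih =>
      intro h j
      have hw : ‖w‖ ≤ r := h w (Multiset.mem_cons_self w R)
      have ih' := ih (fun x hx => h x (Multiset.mem_cons_of_mem hx))
      rw [QP_cons, Multiset.card_cons]
      rcases Nat.eq_zero_or_pos j with rfl | hj
      · rw [coeff_linear_mul_zero, pow_zero, mul_one, norm_neg, norm_mul, pow_succ']
        have := ih' 0
        rw [pow_zero, mul_one] at this
        exact mul_le_mul hw this (norm_nonneg _) hr.le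
      · obtain ⟨j, rfl⟩ : ∃ k, j = k + 1 := ⟨j - 1, by omega⟩
        rw [coeff_linear_mul_succ]
        refine le_trans (mul_le_mul_of_nonneg_right (ultra_sub_le_max _ _)
          (by positivity)) ?_
        rw [max_mul_of_nonneg _ _ (by positivity), max_le_iff]
        constructor
        · rw [pow_succ]
          calc ‖(QP R).coeff j‖ * (r ^ j * r) = (‖(QP R).coeff j‖ * r ^ j) * r := by ring
          _ ≤ r ^ Multiset.card R * r := mul_le_mul_of_nonneg_right (ih' j) hr.le
          _ = r ^ (Multiset.card R + 1) := by rw [pow_succ]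
        · rw [norm_mul]
          calc ‖w‖ * ‖(QP R).coeff (j+1)‖ * r ^ (j+1) ≤ r * (‖(QP R).coeff (j+1)‖ * r ^ (j+1)) := by
                rw [mul_assoc]
                exact mul_le_mul_of_nonneg_right hw
                  (mul_nonneg (norm_nonneg _) (pow_nonneg hr.le _))
          _ ≤ r * r ^ Multiset.card R := mul_le_mul_of_nonneg_left (ih' (j+1)) hr.le
          _ = r ^ (Multiset.card R + 1) := by rw [pow_succ]; ring

/-- L2 : all roots outside the disc of radius r -/
lemma QP_coeff_out {r : ℝ} (hr : 0 < r) :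
    ∀ (R : Multiset K), (∀ w ∈ R, r < ‖w‖) →
    ‖(QP R).coeff 0‖ = (R.map fun w => ‖w‖).prod ∧
    ∀ j, 1 ≤ j → ‖(QP R).coeff j‖ * r ^ j < (R.map fun w => ‖w‖).prod := by
  intro R
  induction R using Multiset.induction_on with
  | empty =>
      intro _
      constructor
      · simp [QP]
      · intro j hj
        rw [QP]
        simp only [Multiset.map_zero, Multiset.prod_zero]
        rw [coeff_one, if_neg (by omega)]
        simp
  | cons w R ih =>
      intro h
      have hw : r < ‖w‖ := h w (Multiset.mem_cons_self w R)
      obtain ⟨ih0, ihj⟩ := ih (fun x hx => h x (Multiset.mem_cons_of_mem hx))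
      have hPp : 0 < (R.map fun w => ‖w‖).prod := by
        apply mprod_pos
        intro x hx
        obtain ⟨u, hu, rfl⟩ := Multiset.mem_map.mp hx
        exact hr.trans (h u (Multiset.mem_cons_of_mem hu))
      have hPc : ((w ::ₘ R).map fun w => ‖w‖).prod = ‖w‖ * (R.map fun w => ‖w‖).prod := by
        rw [Multiset.map_cons, Multiset.prod_cons]
      constructor
      · rw [QP_cons, coeff_linear_mul_zero, norm_neg, norm_mul, ih0, hPc]
      · intro j hj
        obtain ⟨j, rfl⟩ : ∃ k, j = k + 1 := ⟨j - 1, by omega⟩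
        rw [QP_cons, coeff_linear_mul_succ, hPc]
        refine lt_of_le_of_lt (mul_le_mul_of_nonneg_right (ultra_sub_le_max _ _)
          (by positivity)) ?_
        rw [max_mul_of_nonneg _ _ (by positivity), max_lt_iff]
        constructor
        · rcases Nat.eq_zero_or_pos j with rfl | hjpos
          · rw [pow_one, ih0]
            exact (mul_lt_mul_of_pos_left hw hPp).trans_eq (by ring)
          · have h1 : ‖(QP R).coeff j‖ * r ^ (j+1) = (‖(QP R).coeff j‖ * r ^ j) * r := by
              rw [pow_succ]; ring
            rw [h1]
            calc (‖(QP R).coeff j‖ * r ^ j) * r < (R.map fun w => ‖w‖).prod * r :=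
                  mul_lt_mul_of_pos_right (ihj j hjpos) hr
            _ < ‖w‖ * (R.map fun w => ‖w‖).prod := by
                  rw [mul_comm]
                  exact mul_lt_mul_of_pos_right hw hPp
        · rw [norm_mul, mul_assoc]
          have := ihj (j+1) (by omega)
          calc ‖w‖ * (‖(QP R).coeff (j+1)‖ * r ^ (j+1)) < ‖w‖ * (R.map fun w => ‖w‖).prod :=
            mul_lt_mul_of_pos_left this (hr.trans hw)
          _ = ‖w‖ * (R.map fun w => ‖w‖).prod := rfl





variable {K : Type} [NormedField K] [IsUltrametricDist K] [IsAlgClosed K]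

lemma multiset_exists_min : ∀ (s : Multiset ℝ), s ≠ 0 → ∃ y ∈ s, ∀ z ∈ s, y ≤ z := by
  intro s
  induction s using Multiset.induction_on with
  | empty => intro h; exact absurd rfl h
  | cons a s ih =>
      intro _
      rcases eq_or_ne s 0 with rfl | hs
      · exact ⟨a, Multiset.mem_cons_self a 0, by simp⟩
      · obtain ⟨y, hy, hmin⟩ := ih hs
        rcases le_total a y with h | h
        · exact ⟨a, Multiset.mem_cons_self a s, by
            intro z hz
            rcases Multiset.mem_cons.mp hz with rfl | hz
            · exact le_refl z
            · exact h.trans (hmin z hz)⟩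
        · exact ⟨y, Multiset.mem_cons_of_mem hy, by
            intro z hz
            rcases Multiset.mem_cons.mp hz with rfl | hz
            · exact h
            · exact hmin z hz⟩

lemma key_poly {r : ℝ} (hr : 0 < r) (P : K[X]) (h0 : P.coeff 0 ≠ 0) {N : ℕ} (hN1 : 1 ≤ N)
    (hN : ‖P.coeff 0‖ ≤ ‖P.coeff N‖ * r ^ N) (x : K) (hx : ‖x‖ ≤ r) :
    ∃ s : ℕ, 1 ≤ s ∧ s ≤ P.natDegree ∧ ‖P.coeff 0‖ ≤ ‖P.coeff s‖ * r ^ s ∧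
      ∃ w : K, P.IsRoot w ∧ ‖w‖ ≤ r ∧
        ‖x - w‖ ^ s * ‖P.coeff 0‖ ≤ ‖P.eval x‖ * r ^ s := by
  classical
  have hPne : P ≠ 0 := fun h => h0 (by rw [h, coeff_zero])
  have hlead : (0:ℝ) < ‖P.leadingCoeff‖ := by
    rw [norm_pos_iff]; exact leadingCoeff_ne_zero.mpr hPne
  have hcard : P.roots.card = P.natDegree :=
    splits_iff_card_roots.mp (IsAlgClosed.splits P)
  have hfac : C P.leadingCoeff * QP P.roots = P :=
    C_leadingCoeff_mul_prod_multiset_X_sub_C hcard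
  set R := P.roots with hR
  set Rin := R.filter (fun w => ‖w‖ ≤ r) with hRin
  set Rout := R.filter (fun w => ¬ ‖w‖ ≤ r) with hRout
  have hsplit : Rin + Rout = R := Multiset.filter_add_not _ _
  have hin : ∀ w ∈ Rin, ‖w‖ ≤ r := fun w hw => (Multiset.mem_filter.mp hw).2
  have hout : ∀ w ∈ Rout, r < ‖w‖ := fun w hw =>
    not_le.mp (Multiset.mem_filter.mp hw).2
  have hrpos : ∀ w ∈ R, 0 < ‖w‖ := by
    intro w hw
    rw [norm_pos_iff]
    rintro rfl
    exact h0 (by rw [coeff_zero_eq_eval_zero]; exact isRoot_of_mem_roots hw)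
  set Pin := (Rin.map fun w => ‖w‖).prod with hPin
  set Pout := (Rout.map fun w => ‖w‖).prod with hPout
  have hPin_nonneg : 0 ≤ Pin := mprod_nonneg _ (by
    intro y hy; obtain ⟨u, _, rfl⟩ := Multiset.mem_map.mp hy; exact norm_nonneg u)
  have hPin_pos : 0 < Pin := mprod_pos _ (by
    intro y hy; obtain ⟨u, hu, rfl⟩ := Multiset.mem_map.mp hy
    exact hrpos u (Multiset.mem_of_mem_filter hu))
  have hPout_pos : 0 < Pout := mprod_pos _ (by
    intro y hy; obtain ⟨u, hu, rfl⟩ := Multiset.mem_map.mp hy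
    exact hr.trans (hout u hu))
  -- coefficient 0
  have hsplitnorm : ∀ z : K, ‖z‖ ≤ r →
      ‖P.eval z‖ = ‖P.leadingCoeff‖ * ((Rin.map fun w => ‖z - w‖).prod * Pout) := by
    intro z hz
    conv_lhs => rw [← hfac]
    rw [eval_mul, eval_C, norm_mul, QP_eval_norm, ← hsplit, Multiset.map_add,
      Multiset.prod_add]
    congr 2
    rw [hPout]
    refine congrArg Multiset.prod (Multiset.map_congr rfl ?_)
    intro w hw
    have hww : r < ‖w‖ := hout w hw
    have : z - w = -w + z := by ring
    rw [this, ultra_add_eq (by rw [norm_neg]; exact lt_of_le_of_lt hz hww), norm_neg]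
  -- coefficient 0 of P
  have hc0 : ‖P.coeff 0‖ = ‖P.leadingCoeff‖ * (Pin * Pout) := by
    rw [coeff_zero_eq_eval_zero]
    have h00 : ‖(0:K)‖ ≤ r := by rw [norm_zero]; exact hr.le
    rw [hsplitnorm 0 h00]
    congr 2
    rw [hPin]
    refine congrArg Multiset.prod (Multiset.map_congr rfl ?_)
    intro w _
    rw [zero_sub, norm_neg]
  have hRin_ne : Rin ≠ 0 := by
    intro hempty
    have hRR : R = Rout := by rw [← hsplit, hempty, zero_add]
    obtain ⟨hA0, hAj⟩ := QP_coeff_out hr Rout hout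
    have hcN : P.coeff N = P.leadingCoeff * (QP R).coeff N := by
      conv_lhs => rw [← hfac]
      rw [coeff_C_mul]
    have hlt : ‖P.coeff N‖ * r ^ N < ‖P.leadingCoeff‖ * Pout := by
      rw [hcN, norm_mul, mul_assoc]
      refine mul_lt_mul_of_pos_left ?_ hlead
      rw [hRR]
      exact hAj N hN1
    have hPin1 : Pin = 1 := by rw [hPin, hempty]; simp
    have h2 : ‖P.coeff 0‖ = ‖P.leadingCoeff‖ * Pout := by rw [hc0, hPin1, one_mul]
    rw [h2] at hN
    linarith
  set s := Multiset.card Rin with hs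
  have hs1 : 1 ≤ s := by
    rw [hs, Nat.one_le_iff_ne_zero]
    exact fun h => hRin_ne (Multiset.card_eq_zero.mp h)
  have hsdeg : s ≤ P.natDegree := hcard ▸ Multiset.card_le_card (Multiset.filter_le _ _)
  have hQsplit : QP R = QP Rin * QP Rout := by rw [← hsplit, QP_add]
  have hBs : (QP Rin).coeff s = 1 := by
    have := (QP_monic Rin).coeff_natDegree
    rwa [QP_natDegree] at this
  have hAout := QP_coeff_out hr Rout hout
  have h00 : ((s, 0) : ℕ × ℕ) ∈ Finset.HasAntidiagonal.antidiagonal s := by simp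
  have hd : ∀ p ∈ Finset.HasAntidiagonal.antidiagonal s, p ≠ ((s, 0) : ℕ × ℕ) →
      ‖(QP Rin).coeff p.1 * (QP Rout).coeff p.2‖ <
        ‖(QP Rin).coeff (s, (0:ℕ)).1 * (QP Rout).coeff (s, (0:ℕ)).2‖ := by
    intro p hp hne
    have hsum : p.1 + p.2 = s := Finset.HasAntidiagonal.mem_antidiagonal.mp hp
    have hp2 : 1 ≤ p.2 := by
      rcases Nat.eq_zero_or_pos p.2 with h2 | h2
      · exact absurd (Prod.ext_iff.mpr ⟨by omega, h2⟩) hne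
      · exact h2
    have hBle : ‖(QP Rin).coeff p.1‖ ≤ r ^ p.2 := by
      have h1 := QP_coeff_le hr Rin hin p.1
      rw [← hs, ← hsum, pow_add, mul_comm (r ^ p.1) (r ^ p.2)] at h1
      exact le_of_mul_le_mul_right h1 (pow_pos hr p.1)
    have hAlt := hAout.2 p.2 hp2
    simp only [norm_mul, hBs, one_mul, hAout.1]
    calc ‖(QP Rin).coeff p.1‖ * ‖(QP Rout).coeff p.2‖
        ≤ r ^ p.2 * ‖(QP Rout).coeff p.2‖ :=
          mul_le_mul_of_nonneg_right hBle (norm_nonneg _)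
    _ < Pout := by rw [mul_comm]; exact hAlt
  have hdom : ‖(QP Rin * QP Rout).coeff s‖ = Pout := by
    rw [coeff_mul, norm_sum_eq_of_dominant h00 hd]
    simp only [hBs, one_mul]
    exact hAout.1
  have hcs : ‖P.coeff s‖ = ‖P.leadingCoeff‖ * Pout := by
    conv_lhs => rw [← hfac]
    rw [coeff_C_mul, norm_mul, hQsplit, hdom]
  have hPin_le : Pin ≤ r ^ s := by
    have h1 := mprod_le_pow (c := r) (Rin.map fun w => ‖w‖)
      (by intro y hy; obtain ⟨u, _, rfl⟩ := Multiset.mem_map.mp hy; exact norm_nonneg u)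
      (by intro y hy; obtain ⟨u, hu, rfl⟩ := Multiset.mem_map.mp hy; exact hin u hu)
    rwa [Multiset.card_map] at h1
  have hcoeffs_ge : ‖P.coeff 0‖ ≤ ‖P.coeff s‖ * r ^ s := by
    rw [hc0, hcs]
    calc ‖P.leadingCoeff‖ * (Pin * Pout) ≤ ‖P.leadingCoeff‖ * (r ^ s * Pout) := by
          refine mul_le_mul_of_nonneg_left ?_ hlead.le
          exact mul_le_mul_of_nonneg_right hPin_le hPout_pos.le
    _ = ‖P.leadingCoeff‖ * Pout * r ^ s := by ring
  have hmapne : Rin.map (fun w => ‖x - w‖) ≠ 0 := by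
    simpa [Multiset.map_eq_zero] using hRin_ne
  obtain ⟨m, hm_mem, hm_min⟩ := multiset_exists_min _ hmapne
  obtain ⟨w, hw_mem, rfl⟩ := Multiset.mem_map.mp hm_mem
  refine ⟨s, hs1, hsdeg, hcoeffs_ge, w, ?_, hin w hw_mem, ?_⟩
  · exact isRoot_of_mem_roots (Multiset.mem_of_mem_filter hw_mem)
  · have hpow : ‖x - w‖ ^ s ≤ (Rin.map fun u => ‖x - u‖).prod := by
      have h1 := pow_le_mprod (norm_nonneg (x - w)) (Rin.map fun u => ‖x - u‖) hm_min
      rwa [Multiset.card_map] at h1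
    set Pxin := (Rin.map fun u => ‖x - u‖).prod with hPxin
    have hPxin_nonneg : 0 ≤ Pxin := mprod_nonneg _ (by
      intro y hy; obtain ⟨u, _, rfl⟩ := Multiset.mem_map.mp hy; exact norm_nonneg _)
    have hevalx : ‖P.eval x‖ = ‖P.leadingCoeff‖ * (Pxin * Pout) := hsplitnorm x hx
    rw [hc0, hevalx]
    calc ‖x - w‖ ^ s * (‖P.leadingCoeff‖ * (Pin * Pout))
        ≤ Pxin * (‖P.leadingCoeff‖ * (Pin * Pout)) :=
          mul_le_mul_of_nonneg_right hpow
            (mul_nonneg (norm_nonneg _) (mul_nonneg hPin_pos.le hPout_pos.le))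
    _ ≤ Pxin * (‖P.leadingCoeff‖ * (r ^ s * Pout)) := by
          refine mul_le_mul_of_nonneg_left ?_ hPxin_nonneg
          refine mul_le_mul_of_nonneg_left ?_ hlead.le
          exact mul_le_mul_of_nonneg_right hPin_le hPout_pos.le
    _ = ‖P.leadingCoeff‖ * (Pxin * Pout) * r ^ s := by ring




open Polynomial Filter IsUltrametricDist

theorem norm_const_on_disc_of_nonvanishing_power_series
    (p : ℕ) [Fact p.Prime]
    (Qbar : Type) [Field Qbar] [Algebra ℚ_[p] Qbar] [IsAlgClosure ℚ_[p] Qbar]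
    (Cp : Type) [NormedField Cp] [CompleteSpace Cp] [IsUltrametricDist Cp] [IsAlgClosed Cp]
    [Algebra ℚ_[p] Cp] [Algebra Qbar Cp] [IsScalarTower ℚ_[p] Qbar Cp]
    (hQp : Isometry (algebraMap ℚ_[p] Cp))
    (hdense : DenseRange (algebraMap Qbar Cp))
    (a : ℕ → Cp) (r : ℝ) (hr : 0 < r)
    (hconv : Filter.Tendsto (fun n : ℕ => ‖a n‖ * r ^ n) Filter.atTop (nhds 0))
    (hne : ∀ x : Cp, ‖x‖ ≤ r → (∑' n : ℕ, a n * x ^ n) ≠ 0) :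
    ∀ x : Cp, ‖x‖ ≤ r → ‖∑' n : ℕ, a n * x ^ n‖ = ‖a 0‖ := by
  classical
  set F : Cp → Cp := fun y => ∑' n : ℕ, a n * y ^ n with hF
  have hterm : ∀ (y : Cp), ‖y‖ ≤ r → ∀ n, ‖a n * y ^ n‖ ≤ ‖a n‖ * r ^ n := by
    intro y hy n
    rw [norm_mul, norm_pow]
    exact mul_le_mul_of_nonneg_left (pow_le_pow_left₀ (norm_nonneg y) hy n) (norm_nonneg _)
  have hsum : ∀ y : Cp, ‖y‖ ≤ r → Summable (fun n => a n * y ^ n) := by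
    intro y hy
    apply NonarchimedeanAddGroup.summable_of_tendsto_cofinite_zero
    rw [Nat.cofinite_eq_atTop]
    refine tendsto_zero_iff_norm_tendsto_zero.2 ?_
    exact squeeze_zero (fun n => norm_nonneg _) (hterm y hy) hconv
  have hF0 : F 0 = a 0 := by
    rw [hF]
    simp only
    rw [tsum_eq_single 0 (fun n hn => by rw [zero_pow hn, mul_zero])]
    simp
  have ha0 : a 0 ≠ 0 := by
    have := hne 0 (by rw [norm_zero]; exact hr.le)
    rwa [show (∑' n : ℕ, a n * (0:Cp) ^ n) = F 0 from rfl, hF0] at this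
  have ha0pos : (0:ℝ) < ‖a 0‖ := norm_pos_iff.mpr ha0
  -- uniform bound on ‖a n‖ r^n
  obtain ⟨K0, hK0⟩ : ∃ K0, ∀ n ≥ K0, ‖a n‖ * r ^ n < 1 :=
    eventually_atTop.mp (hconv.eventually (gt_mem_nhds one_pos))
  set Cb : ℝ := 1 + ∑ n ∈ Finset.range K0, ‖a n‖ * r ^ n with hCbdef
  have hCb : ∀ n, ‖a n‖ * r ^ n ≤ Cb := by
    intro n
    rcases lt_or_ge n K0 with h | h
    · have h1 : ‖a n‖ * r ^ n ≤ ∑ i ∈ Finset.range K0, ‖a i‖ * r ^ i :=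
        Finset.single_le_sum (f := fun i => ‖a i‖ * r ^ i)
          (fun i _ => by positivity) (Finset.mem_range.mpr h)
      rw [hCbdef]; linarith
    · have := (hK0 n h).le
      rw [hCbdef]
      have h2 : (0:ℝ) ≤ ∑ i ∈ Finset.range K0, ‖a i‖ * r ^ i :=
        Finset.sum_nonneg fun i _ => by positivity
      linarith
  have hCbpos : (0:ℝ) < Cb := lt_of_lt_of_le (by positivity) (hCb 0)
  -- Lipschitz bound on the disc
  have hFsub : ∀ u v : Cp, ‖u‖ ≤ r → ‖v‖ ≤ r → ‖F u - F v‖ ≤ (Cb / r) * ‖u - v‖ := by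
    intro u v hu hv
    have h1 : F u - F v = ∑' n : ℕ, (a n * u ^ n - a n * v ^ n) :=
      (Summable.tsum_sub (hsum u hu) (hsum v hv)).symm
    rw [h1]
    refine norm_tsum_le_of_forall_le_of_nonneg
      (mul_nonneg (div_nonneg hCbpos.le hr.le) (norm_nonneg _)) ?_
    intro n
    match n with
    | 0 =>
      simp only [pow_zero, mul_one, sub_self, norm_zero]
      exact mul_nonneg (div_nonneg hCbpos.le hr.le) (norm_nonneg _)
    | (n+1) =>
      rw [← mul_sub, ← geom_sum₂_mul u v (n+1), norm_mul, norm_mul]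
      have hgs : ‖∑ i ∈ Finset.range (n+1), u ^ i * v ^ (n + 1 - 1 - i)‖ ≤ r ^ n := by
        refine norm_sum_le_of_forall_le_of_nonneg (pow_nonneg hr.le n) ?_
        intro i hi
        have hi' : i ≤ n := by have := Finset.mem_range.mp hi; omega
        rw [norm_mul, norm_pow, norm_pow]
        calc ‖u‖ ^ i * ‖v‖ ^ (n + 1 - 1 - i) ≤ r ^ i * r ^ (n + 1 - 1 - i) :=
              mul_le_mul (pow_le_pow_left₀ (norm_nonneg _) hu i)
                (pow_le_pow_left₀ (norm_nonneg _) hv _)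
                (pow_nonneg (norm_nonneg _) _) (pow_nonneg hr.le _)
        _ = r ^ n := by rw [← pow_add]; congr 1; omega
      have hcoef : ‖a (n+1)‖ * r ^ n ≤ Cb / r := by
        rw [le_div_iff₀ hr]
        calc ‖a (n+1)‖ * r ^ n * r = ‖a (n+1)‖ * r ^ (n+1) := by rw [pow_succ]; ring
        _ ≤ Cb := hCb (n+1)
      calc ‖a (n+1)‖ * (‖∑ i ∈ Finset.range (n+1), u ^ i * v ^ (n + 1 - 1 - i)‖ * ‖u - v‖)
          ≤ ‖a (n+1)‖ * (r ^ n * ‖u - v‖) := by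
            refine mul_le_mul_of_nonneg_left ?_ (norm_nonneg _)
            exact mul_le_mul_of_nonneg_right hgs (norm_nonneg _)
      _ = (‖a (n+1)‖ * r ^ n) * ‖u - v‖ := by ring
      _ ≤ (Cb / r) * ‖u - v‖ := mul_le_mul_of_nonneg_right hcoef (norm_nonneg _)
  -- tail bounds
  have htail : ∀ (D : ℕ) (B : ℝ), 0 ≤ B → (∀ n, D < n → ‖a n‖ * r ^ n ≤ B) →
      ∀ y : Cp, ‖y‖ ≤ r → ‖F y - ∑ n ∈ Finset.range (D+1), a n * y ^ n‖ ≤ B := by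
    intro D B hB hBn y hy
    have h1 := Summable.sum_add_tsum_nat_add (f := fun n => a n * y ^ n) (D+1) (hsum y hy)
    have h2 : F y - ∑ n ∈ Finset.range (D+1), a n * y ^ n
        = ∑' n : ℕ, a (n + (D+1)) * y ^ (n + (D+1)) := by
      rw [hF]; simp only; rw [← h1, add_sub_cancel_left]
    rw [h2]
    refine norm_tsum_le_of_forall_le_of_nonneg hB ?_
    intro n
    exact (hterm y hy _).trans (hBn _ (by omega))
  -- THE KEY CLAIM
  have key : ∀ n, 1 ≤ n → ‖a n‖ * r ^ n < ‖a 0‖ := by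
    by_contra hcon
    push_neg at hcon
    obtain ⟨N, hN1, hN⟩ := hcon
    obtain ⟨S0, hS0⟩ : ∃ S0, ∀ n ≥ S0, ‖a n‖ * r ^ n < ‖a 0‖ :=
      eventually_atTop.mp (hconv.eventually (gt_mem_nhds ha0pos))
    have hSbound : ∀ s : ℕ, ‖a 0‖ ≤ ‖a s‖ * r ^ s → s ≤ S0 := by
      intro s h
      by_contra hh
      push_neg at hh
      exact absurd h (not_le.mpr (hS0 s hh.le))
    have hS1 : 1 ≤ S0 := hN1.trans (hSbound N hN)
    have hS0R : (0:ℝ) < (S0:ℝ) := by exact_mod_cast hS1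
    -- KEY STEP LEMMA
    have KSL : ∀ y : Cp, ‖y‖ ≤ r → ‖F y‖ ≤ ‖a 0‖ → ∀ η : ℝ, 0 < η →
        ∃ z : Cp, ‖z‖ ≤ r ∧ ‖F z‖ ≤ η ∧
          ‖z - y‖ ≤ r * (‖F y‖ / ‖a 0‖) ^ (1/(S0:ℝ) : ℝ) := by
      intro y hy hFyle η hη
      have hFy_pos : 0 < ‖F y‖ := norm_pos_iff.mpr (hne y hy)
      set δ := ‖F y‖ with hδ
      obtain ⟨D0, hD0⟩ : ∃ D0, ∀ n ≥ D0, ‖a n‖ * r ^ n < min η δ :=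
        eventually_atTop.mp (hconv.eventually (gt_mem_nhds (lt_min hη hFy_pos)))
      set D := max N D0 with hD
      set P : Polynomial Cp := ∑ n ∈ Finset.range (D+1), Polynomial.monomial n (a n) with hP
      have hPco : ∀ m, P.coeff m = if m ∈ Finset.range (D+1) then a m else 0 := by
        intro m
        rw [hP, finset_sum_coeff]
        simp_rw [coeff_monomial]
        rw [Finset.sum_ite_eq' (Finset.range (D+1)) m a]
      have hPcoeff : ∀ m, m ≤ D → P.coeff m = a m := by
        intro m hm
        rw [hPco m, if_pos (Finset.mem_range.mpr (by omega))]
      have hPcoeff' : ∀ m, D < m → P.coeff m = 0 := by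
        intro m hm
        rw [hPco m, if_neg (by simp; omega)]
      have hPdeg : P.natDegree ≤ D := natDegree_le_iff_coeff_eq_zero.mpr hPcoeff'
      have hPeval : ∀ z : Cp, P.eval z = ∑ n ∈ Finset.range (D+1), a n * z ^ n := by
        intro z
        rw [hP, eval_finset_sum]
        simp [eval_monomial]
      have hP0 : P.coeff 0 ≠ 0 := by rw [hPcoeff 0 (by omega)]; exact ha0
      have hNle : N ≤ D := le_max_left N D0
      have hND : ‖P.coeff 0‖ ≤ ‖P.coeff N‖ * r ^ N := by
        rw [hPcoeff 0 (by omega), hPcoeff N hNle]; exact hN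
      obtain ⟨s, hs1, hsdeg, hcs, w, hwroot, hwr, hest⟩ := key_poly hr P hP0 hN1 hND y hy
      have hsS : s ≤ S0 := by
        refine hSbound s ?_
        rwa [hPcoeff 0 (by omega), hPcoeff s (hsdeg.trans hPdeg)] at hcs
      have hsR : (0:ℝ) < (s:ℝ) := by exact_mod_cast hs1
      have htb : ∀ z : Cp, ‖z‖ ≤ r → ‖F z - P.eval z‖ ≤ min η δ := by
        intro z hz
        have := htail D (min η δ) (le_min hη.le hFy_pos.le)
          (fun n hn => (hD0 n (le_trans (le_max_right N D0) hn.le)).le) z hz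
        rwa [← hPeval z] at this
      have hPy : ‖P.eval y‖ ≤ δ := by
        have h1 := htb y hy
        have h2 : P.eval y = F y - (F y - P.eval y) := by ring
        rw [h2]
        exact (ultra_sub_le_max _ _).trans
          (max_le (le_of_eq hδ.symm) (h1.trans (min_le_right _ _)))
      have hFw : ‖F w‖ ≤ η := by
        have h1 := htb w hwr
        rw [hwroot.eq_zero, sub_zero] at h1
        exact h1.trans (min_le_left _ _)
      refine ⟨w, hwr, hFw, ?_⟩
      -- distance estimate
      rw [norm_sub_rev]
      set q := ‖y - w‖ with hq
      have hq0 : 0 ≤ q := norm_nonneg _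
      have hqs : q ^ s * ‖a 0‖ ≤ δ * r ^ s := by
        have h1 : ‖P.eval y‖ * r ^ s ≤ δ * r ^ s :=
          mul_le_mul_of_nonneg_right hPy (pow_nonneg hr.le s)
        rw [hPcoeff 0 (by omega)] at hest
        exact hest.trans h1
      have hqs' : q ^ s ≤ δ / ‖a 0‖ * r ^ s := by
        rw [div_mul_eq_mul_div, le_div_iff₀ ha0pos]
        linarith
      have hqle : q ≤ (δ / ‖a 0‖ * r ^ s) ^ ((s:ℝ)⁻¹) := by
        have h1 := Real.rpow_le_rpow (pow_nonneg hq0 s) hqs' (by positivity : (0:ℝ) ≤ (s:ℝ)⁻¹)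
        rwa [Real.pow_rpow_inv_natCast hq0 (by omega)] at h1
      have hsplitpow : (δ / ‖a 0‖ * r ^ s) ^ ((s:ℝ)⁻¹)
          = (δ / ‖a 0‖) ^ ((s:ℝ)⁻¹) * r := by
        rw [Real.mul_rpow (by positivity) (by positivity),
          Real.pow_rpow_inv_natCast hr.le (by omega)]
      have hmono : (δ / ‖a 0‖) ^ ((s:ℝ)⁻¹) ≤ (δ / ‖a 0‖) ^ (1/(S0:ℝ) : ℝ) := by
        refine Real.rpow_le_rpow_of_exponent_ge (by positivity) ?_ ?_
        · rw [div_le_one ha0pos]; exact hFyle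
        · rw [one_div]
          refine inv_anti₀ hsR ?_
          exact_mod_cast hsS
      calc q ≤ (δ / ‖a 0‖) ^ ((s:ℝ)⁻¹) * r := hqle.trans_eq hsplitpow
      _ ≤ (δ / ‖a 0‖) ^ (1/(S0:ℝ) : ℝ) * r := mul_le_mul_of_nonneg_right hmono hr.le
      _ = r * (δ / ‖a 0‖) ^ (1/(S0:ℝ) : ℝ) := by ring
    -- iterate
    have step : ∀ (k : ℕ) (y : Cp), ‖y‖ ≤ r → ‖F y‖ ≤ ‖a 0‖ * (1/2:ℝ)^(S0*k) →
        ∃ z, (‖z‖ ≤ r ∧ ‖F z‖ ≤ ‖a 0‖ * (1/2:ℝ)^(S0*(k+1))) ∧ ‖z - y‖ ≤ r * (1/2:ℝ)^k := by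
      intro k y hy hFy
      have hFy' : ‖F y‖ ≤ ‖a 0‖ := by
        refine hFy.trans ?_
        have : ((1:ℝ)/2)^(S0*k) ≤ 1 := pow_le_one₀ (by norm_num) (by norm_num)
        nlinarith
      obtain ⟨z, hz, hFz, hdist⟩ := KSL y hy hFy' (‖a 0‖ * (1/2:ℝ)^(S0*(k+1))) (by positivity)
      refine ⟨z, ⟨hz, hFz⟩, hdist.trans ?_⟩
      have hbase : ‖F y‖ / ‖a 0‖ ≤ (1/2:ℝ)^(S0*k) := by
        rw [div_le_iff₀ ha0pos]
        calc ‖F y‖ ≤ ‖a 0‖ * (1/2:ℝ)^(S0*k) := hFy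
        _ = (1/2:ℝ)^(S0*k) * ‖a 0‖ := by ring
      have h1 : (‖F y‖ / ‖a 0‖) ^ (1/(S0:ℝ) : ℝ) ≤ ((1/2:ℝ)^(S0*k)) ^ (1/(S0:ℝ) : ℝ) :=
        Real.rpow_le_rpow (by positivity) hbase (by positivity)
      have h2 : (((1:ℝ)/2)^(S0*k)) ^ (1/(S0:ℝ) : ℝ) = ((1:ℝ)/2)^k := by
        rw [← Real.rpow_natCast (1/2:ℝ) (S0*k), ← Real.rpow_mul (by norm_num)]
        rw [show ((S0*k : ℕ):ℝ) * (1/(S0:ℝ)) = (k:ℕ) by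
          push_cast
          field_simp]
        rw [Real.rpow_natCast]
      exact mul_le_mul_of_nonneg_left (h1.trans_eq h2) hr.le
    choose! next hinv hdist using step
    have h00 : ‖(0:Cp)‖ ≤ r ∧ ‖F 0‖ ≤ ‖a 0‖ * (1/2:ℝ)^(S0*0) := by
      refine ⟨by rw [norm_zero]; exact hr.le, ?_⟩
      rw [hF0]
      simp
    let T : ℕ → Type := fun k => {y : Cp // ‖y‖ ≤ r ∧ ‖F y‖ ≤ ‖a 0‖ * (1/2:ℝ)^(S0*k)}
    let seq : ∀ k, T k := fun k => Nat.rec (⟨0, h00⟩ : T 0)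
      (fun k pr => ⟨next k pr.1, hinv k pr.1 pr.2.1 pr.2.2⟩) k
    let u : ℕ → Cp := fun k => (seq k).1
    have hu_inv : ∀ k, ‖u k‖ ≤ r ∧ ‖F (u k)‖ ≤ ‖a 0‖ * (1/2:ℝ)^(S0*k) := fun k => (seq k).2
    have hu_succ : ∀ k, u (k+1) = next k (u k) := fun k => rfl
    have hu_dist : ∀ k, ‖u (k+1) - u k‖ ≤ r * (1/2:ℝ)^k := by
      intro k
      rw [hu_succ k]
      exact hdist k (u k) (hu_inv k).1 (hu_inv k).2
    have hcauchy : CauchySeq u := by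
      refine cauchySeq_of_le_geometric (1/2) r (by norm_num) (fun n => ?_)
      rw [dist_eq_norm, norm_sub_rev]
      exact hu_dist n
    obtain ⟨z, hz⟩ := cauchySeq_tendsto_of_complete hcauchy
    have hzr : ‖z‖ ≤ r :=
      le_of_tendsto hz.norm (Filter.Eventually.of_forall fun k => (hu_inv k).1)
    have hpowlim : Tendsto (fun k : ℕ => ‖a 0‖ * (1/2:ℝ)^(S0*k)) atTop (nhds 0) := by
      have h1 : Tendsto (fun k : ℕ => ((1/2:ℝ)^S0)^k) atTop (nhds 0) :=
        tendsto_pow_atTop_nhds_zero_of_lt_one (by positivity)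
          (pow_lt_one₀ (by norm_num) (by norm_num) (by omega))
      have h2 := h1.const_mul ‖a 0‖
      rw [mul_zero] at h2
      simpa [pow_mul] using h2
    have hFz0 : Tendsto (fun k => ‖F (u k)‖) atTop (nhds 0) :=
      squeeze_zero (fun k => norm_nonneg _) (fun k => (hu_inv k).2) hpowlim
    have hdistz : Tendsto (fun k => ‖z - u k‖) atTop (nhds 0) := by
      have h1 := (hz.const_sub z)
      rw [sub_self] at h1
      simpa using h1.norm
    have hFzu : Tendsto (fun k => ‖F z - F (u k)‖) atTop (nhds 0) := by
      refine squeeze_zero (fun k => norm_nonneg _)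
        (fun k => hFsub z (u k) hzr (hu_inv k).1) ?_
      have h1 := hdistz.const_mul (Cb/r)
      rw [mul_zero] at h1
      exact h1
    have hFzle : ‖F z‖ ≤ 0 := by
      have hsum3 : Tendsto (fun k => ‖F z - F (u k)‖ + ‖F (u k)‖) atTop (nhds 0) := by
        have := hFzu.add hFz0
        rwa [add_zero] at this
      refine ge_of_tendsto hsum3 (Filter.Eventually.of_forall fun k => ?_)
      calc ‖F z‖ = ‖(F z - F (u k)) + F (u k)‖ := by rw [sub_add_cancel]
      _ ≤ ‖F z - F (u k)‖ + ‖F (u k)‖ := norm_add_le _ _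
    exact hne z hzr (norm_le_zero_iff.mp hFzle)
  -- CONCLUSION
  intro x hx
  obtain ⟨K1, hK1⟩ : ∃ K1, ∀ n ≥ K1, ‖a n‖ * r ^ n < ‖a 0‖/2 :=
    eventually_atTop.mp (hconv.eventually (gt_mem_nhds (by positivity)))
  set Tset := insert (‖a 0‖/2)
    ((Finset.range (K1+1)).image fun n => if 1 ≤ n then ‖a n‖ * r ^ n else 0) with hT
  have hTne : Tset.Nonempty := ⟨_, Finset.mem_insert_self _ _⟩
  set m := Tset.max' hTne with hm
  have hm_lt : m < ‖a 0‖ := by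
    rw [hm, Finset.max'_lt_iff]
    intro t ht
    rcases Finset.mem_insert.mp ht with rfl | ht
    · linarith
    · obtain ⟨n, _, rfl⟩ := Finset.mem_image.mp ht
      split_ifs with h
      · exact key n h
      · exact ha0pos
  have hm_half : ‖a 0‖/2 ≤ m := Finset.le_max' _ _ (Finset.mem_insert_self _ _)
  have hm0 : 0 ≤ m := le_trans (by positivity) hm_half
  have hm_ge : ∀ n, 1 ≤ n → ‖a n‖ * r ^ n ≤ m := by
    intro n hn
    rcases le_or_gt n K1 with h | h
    · refine Finset.le_max' _ _ ?_
      refine Finset.mem_insert_of_mem ?_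
      refine Finset.mem_image.mpr ⟨n, Finset.mem_range.mpr (by omega), ?_⟩
      rw [if_pos hn]
    · exact (hK1 n h.le).le.trans hm_half
  have hdec : F x = a 0 + ∑' n : ℕ, a (n+1) * x ^ (n+1) := by
    rw [hF]
    simp only
    rw [Summable.tsum_eq_zero_add (hsum x hx), pow_zero, mul_one]
  have htail2 : ‖∑' n : ℕ, a (n+1) * x ^ (n+1)‖ ≤ m :=
    norm_tsum_le_of_forall_le_of_nonneg hm0 fun n =>
      (hterm x hx (n+1)).trans (hm_ge (n+1) (by omega))
  have hFx : (∑' n : ℕ, a n * x ^ n) = F x := rfl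
  rw [hFx, hdec]
  exact ultra_add_eq (lt_of_le_of_lt htail2 hm_lt)
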